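/- For the potential Φ(u,σ;d) = (1/2)‖d − Hu‖_Σ² + (1/2)log(det Σ), if d₁, d₂ lie in the ball of radius r centered at the origin of ℝ^{N_d}, then |Φ(u,σ;d₁) − Φ(u,σ;d₂)| ≤ (1 + ∑_{k=1}^{N_d} σ_k^{-1/2}) (∑_{ℓ=1}^{N_d} σ_ℓ^{-1/2}) (r + C‖u‖) ‖d₁ − d₂‖, where C is any constant larger than the operator norm of H. -/

import Mathlib

open scoped BigOperators

lemma coord_abs_le_norm {n : ℕ} (d : EuclideanSpace ℝ (Fin n)) (k : Fin n) :
    |d k| ≤ ‖d‖ := by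
  rw [EuclideanSpace.norm_eq, ← Real.sqrt_sq_eq_abs]
  apply Real.sqrt_le_sqrt
  have : (d k) ^ 2 = ‖d k‖ ^ 2 := by rw [Real.norm_eq_abs, sq_abs]
  rw [this]
  exact Finset.single_le_sum (f := fun i => ‖d i‖ ^ 2)
    (fun i _ => sq_nonneg _) (Finset.mem_univ k)

/-- Lipschitz continuity of the potential in the data: for d₁, d₂ in the ball
of radius r, |Φ(u,σ;d₁) − Φ(u,σ;d₂)| ≤ (1 + ∑ σ_k^{-1/2})(∑ σ_ℓ^{-1/2})(r + C‖u‖)‖d₁ − d₂‖,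
where C is any constant larger than the operator norm of H. -/
theorem stmt1 {Hu : Type*} [NormedAddCommGroup Hu] [InnerProductSpace ℝ Hu]
    (Nd : ℕ)
    (H : Hu →L[ℝ] EuclideanSpace ℝ (Fin Nd))
    (C : ℝ) (hC : ‖H‖ < C)
    (u : Hu) (σ : Fin Nd → ℝ) (hσ : ∀ k, 0 < σ k)
    (r : ℝ) (d₁ d₂ : EuclideanSpace ℝ (Fin Nd))
    (hd₁ : ‖d₁‖ < r) (hd₂ : ‖d₂‖ < r) :
    |((1/2 : ℝ) * (∑ k, (d₁ k - H u k) ^ 2 / σ k) + (1/2 : ℝ) * Real.log (∏ k, σ k))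
      - ((1/2 : ℝ) * (∑ k, (d₂ k - H u k) ^ 2 / σ k) + (1/2 : ℝ) * Real.log (∏ k, σ k))| ≤
      (1 + ∑ k, (σ k) ^ (-(1:ℝ)/2)) * (∑ l, (σ l) ^ (-(1:ℝ)/2)) * (r + C * ‖u‖)
        * ‖d₁ - d₂‖ := by
  have hC0 : 0 ≤ C := le_of_lt (lt_of_le_of_lt (norm_nonneg H) hC)
  have hr0 : 0 ≤ r := le_trans (norm_nonneg d₁) hd₁.le
  set M : ℝ := r + C * ‖u‖ with hMdef
  have hM0 : 0 ≤ M := by positivity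
  set s : Fin Nd → ℝ := fun k => (σ k) ^ (-(1:ℝ)/2) with hsdef
  have hsk : ∀ k, 0 ≤ s k := fun k => Real.rpow_nonneg (hσ k).le _
  set S : ℝ := ∑ k, s k with hSdef
  have hS0 : 0 ≤ S := Finset.sum_nonneg fun k _ => hsk k
  have hδ0 : (0:ℝ) ≤ ‖d₁ - d₂‖ := norm_nonneg _
  have hHu : ∀ k, |H u k| ≤ C * ‖u‖ := by
    intro k
    calc |H u k| ≤ ‖H u‖ := coord_abs_le_norm _ k
      _ ≤ ‖H‖ * ‖u‖ := H.le_opNorm u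
      _ ≤ C * ‖u‖ := mul_le_mul_of_nonneg_right hC.le (norm_nonneg u)
  have hδk : ∀ k, |d₁ k - d₂ k| ≤ ‖d₁ - d₂‖ := by
    intro k
    have := coord_abs_le_norm (d₁ - d₂) k
    simpa using this
  -- per-term bound
  have term : ∀ k ∈ Finset.univ, |(1/2 : ℝ) * (((d₁ k - H u k) ^ 2 - (d₂ k - H u k) ^ 2) / σ k)|
      ≤ M * ‖d₁ - d₂‖ * (s k * s k) := by
    intro k _
    have hσk := hσ k
    have hs : s k * s k = (σ k)⁻¹ := by
      rw [hsdef]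
      simp only
      rw [← Real.rpow_add hσk]
      norm_num
      exact Real.rpow_neg_one _
    have hnum : |(d₁ k - H u k) ^ 2 - (d₂ k - H u k) ^ 2| ≤ |d₁ k - d₂ k| * (2 * M) := by
      have hfac : (d₁ k - H u k) ^ 2 - (d₂ k - H u k) ^ 2
          = (d₁ k - d₂ k) * (d₁ k + d₂ k - 2 * H u k) := by ring
      rw [hfac, abs_mul]
      refine mul_le_mul_of_nonneg_left ?_ (abs_nonneg _)
      calc |d₁ k + d₂ k - 2 * H u k| ≤ |d₁ k + d₂ k| + |2 * H u k| := abs_sub _ _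
        _ ≤ (|d₁ k| + |d₂ k|) + 2 * |H u k| := by
            rw [abs_mul]
            gcongr
            · exact abs_add_le _ _
            · simp [abs_of_nonneg]
        _ ≤ (r + r) + 2 * (C * ‖u‖) := by
            gcongr
            · exact le_trans (coord_abs_le_norm d₁ k) hd₁.le
            · exact le_trans (coord_abs_le_norm d₂ k) hd₂.le
            · exact hHu k
        _ = 2 * M := by rw [hMdef]; ring
    have h12 : |(1/2 : ℝ) * (((d₁ k - H u k) ^ 2 - (d₂ k - H u k) ^ 2) / σ k)|
        = (1/2 : ℝ) * (|(d₁ k - H u k) ^ 2 - (d₂ k - H u k) ^ 2| / σ k) := by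
      rw [abs_mul, abs_div, abs_div, abs_of_pos hσk]
      norm_num
    rw [hs, h12]
    calc (1/2 : ℝ) * (|(d₁ k - H u k) ^ 2 - (d₂ k - H u k) ^ 2| / σ k)
        ≤ (1/2 : ℝ) * ((|d₁ k - d₂ k| * (2 * M)) / σ k) := by
          gcongr
      _ = |d₁ k - d₂ k| * M * (σ k)⁻¹ := by field_simp
      _ ≤ ‖d₁ - d₂‖ * M * (σ k)⁻¹ :=
          mul_le_mul_of_nonneg_right
            (mul_le_mul_of_nonneg_right (hδk k) hM0) (by positivity)
      _ = M * ‖d₁ - d₂‖ * (σ k)⁻¹ := by ring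
  -- assemble
  have step1 : ((1/2 : ℝ) * (∑ k, (d₁ k - H u k) ^ 2 / σ k) + (1/2 : ℝ) * Real.log (∏ k, σ k))
      - ((1/2 : ℝ) * (∑ k, (d₂ k - H u k) ^ 2 / σ k) + (1/2 : ℝ) * Real.log (∏ k, σ k))
      = ∑ k, (1/2 : ℝ) * (((d₁ k - H u k) ^ 2 - (d₂ k - H u k) ^ 2) / σ k) := by
    rw [← Finset.mul_sum]
    rw [show (∑ k, (((d₁ k - H u k) ^ 2 - (d₂ k - H u k) ^ 2) / σ k))
        = ∑ k, ((d₁ k - H u k) ^ 2 / σ k - (d₂ k - H u k) ^ 2 / σ k) from by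
      apply Finset.sum_congr rfl; intro k _; rw [sub_div]]
    rw [Finset.sum_sub_distrib]
    ring
  have sqS : ∑ k, s k * s k ≤ S * S := by
    calc ∑ k, s k * s k ≤ ∑ k, s k * S := by
          apply Finset.sum_le_sum
          intro k _
          exact mul_le_mul_of_nonneg_left
            (Finset.single_le_sum (fun i _ => hsk i) (Finset.mem_univ k)) (hsk k)
      _ = S * S := by rw [← Finset.sum_mul]
  calc |((1/2 : ℝ) * (∑ k, (d₁ k - H u k) ^ 2 / σ k) + (1/2 : ℝ) * Real.log (∏ k, σ k))
      - ((1/2 : ℝ) * (∑ k, (d₂ k - H u k) ^ 2 / σ k) + (1/2 : ℝ) * Real.log (∏ k, σ k))|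
      = |∑ k, (1/2 : ℝ) * (((d₁ k - H u k) ^ 2 - (d₂ k - H u k) ^ 2) / σ k)| := by
        rw [step1]
    _ ≤ ∑ k, |(1/2 : ℝ) * (((d₁ k - H u k) ^ 2 - (d₂ k - H u k) ^ 2) / σ k)| :=
        Finset.abs_sum_le_sum_abs _ _
    _ ≤ ∑ k, M * ‖d₁ - d₂‖ * (s k * s k) := Finset.sum_le_sum term
    _ = M * ‖d₁ - d₂‖ * ∑ k, s k * s k := by rw [← Finset.mul_sum]
    _ ≤ M * ‖d₁ - d₂‖ * (S * S) := by
        apply mul_le_mul_of_nonneg_left sqS (by positivity)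
    _ ≤ (1 + S) * S * M * ‖d₁ - d₂‖ := by
        have hSle : S * S ≤ (1 + S) * S := by nlinarith
        nlinarith [mul_le_mul_of_nonneg_left hSle (mul_nonneg hM0 hδ0)]
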